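/- For positive real constants a, b, c, the function g(x) = x * log₂(1 + a/(b x + c)) is strictly increasing on (0, ∞). -/

import Mathlib

private lemma aux_hasDerivAt (b d x : ℝ) (h : 0 < b * x + d) :
    HasDerivAt (fun x : ℝ => Real.log (b * x + d)) (b / (b * x + d)) x := by
  have hlin : HasDerivAt (fun x : ℝ => b * x + d) b x := by
    simpa using ((hasDerivAt_id x).const_mul b).add_const d
  have := (Real.hasDerivAt_log h.ne').comp x hlin
  simpa [div_eq_inv_mul, Function.comp_def] using this

private lemma aux_mono (a b c : ℝ) (ha : 0 < a) (hb : 0 < b) (hc : 0 < c) :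
    StrictMonoOn (fun x : ℝ => x * (Real.log (b * x + (a + c)) - Real.log (b * x + c)))
      (Set.Ioi 0) := by
  have hder : ∀ x ∈ Set.Ioi (0:ℝ),
      HasDerivAt (fun x : ℝ => x * (Real.log (b * x + (a + c)) - Real.log (b * x + c)))
        ((Real.log (b * x + (a + c)) - Real.log (b * x + c))
          + x * (b / (b * x + (a + c)) - b / (b * x + c))) x := by
    intro x hx
    have hx0 : 0 < x := hx
    have hu : 0 < b * x + c := by positivity
    have hv : 0 < b * x + (a + c) := by positivity
    have h1 := aux_hasDerivAt b (a + c) x hv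
    have h2 := aux_hasDerivAt b c x hu
    have := (hasDerivAt_id x).mul (h1.sub h2)
    simpa [mul_comm, Pi.mul_def, Pi.sub_def, id] using this
  apply strictMonoOn_of_deriv_pos (convex_Ioi 0)
  · exact fun x hx => (hder x hx).continuousAt.continuousWithinAt
  · intro x hx
    rw [interior_Ioi] at hx
    have hx0 : 0 < x := hx
    have hu : 0 < b * x + c := by positivity
    have hv : 0 < b * x + (a + c) := by positivity
    rw [(hder x hx).deriv]
    have hlog' : a / (b * x + (a + c)) ≤ Real.log (b * x + (a + c)) - Real.log (b * x + c) := by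
      have h := Real.log_le_sub_one_of_pos (x := (b * x + c) / (b * x + (a + c))) (by positivity)
      rw [Real.log_div hu.ne' hv.ne'] at h
      have heq2 : (b * x + c) / (b * x + (a + c)) - 1 = -(a / (b * x + (a + c))) := by
        field_simp
        ring
      linarith [heq2]
    have hkey : a / (b * x + (a + c)) + x * (b / (b * x + (a + c)) - b / (b * x + c)) > 0 := by
      have : a / (b * x + (a + c)) + x * (b / (b * x + (a + c)) - b / (b * x + c))
          = a * c / ((b * x + (a + c)) * (b * x + c)) := by
        field_simp
        ring
      rw [this]
      positivity
    linarith

/-- For positive constants `a b c`, `x ↦ x * log₂ (1 + a/(b x + c))` is strictly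
increasing on `(0, ∞)`. -/
theorem strictMonoOn_mul_logb (a b c : ℝ) (ha : 0 < a) (hb : 0 < b) (hc : 0 < c) :
    StrictMonoOn (fun x : ℝ => x * Real.logb 2 (1 + a / (b * x + c))) (Set.Ioi 0) := by
  have hL : 0 < Real.log 2 := Real.log_pos (by norm_num)
  have heq : ∀ x ∈ Set.Ioi (0:ℝ),
      x * Real.logb 2 (1 + a / (b * x + c))
        = x * (Real.log (b * x + (a + c)) - Real.log (b * x + c)) / Real.log 2 := by
    intro x hx
    have hx0 : 0 < x := hx
    have hu : 0 < b * x + c := by positivity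
    have h1 : 1 + a / (b * x + c) = (b * x + (a + c)) / (b * x + c) := by
      field_simp; ring
    rw [Real.logb, h1, Real.log_div (by positivity) hu.ne']
    ring
  intro x hx y hy hxy
  have := aux_mono a b c ha hb hc hx hy hxy
  simp only [heq x hx, heq y hy]
  exact div_lt_div_of_pos_right this hL
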